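/- Let k ≥ 1 and consider signed-weighted lattice paths in the double staircase partition ρ̃_{2k}. Then wt((2k,1),(1,2k)) = 0, wt((2k,2),(1,2k)) = C_{k−1}, wt((2k,1),(2,2k)) = −C_{k−1}, and wt((2k,2),(2,2k)) = C_{k−1}. -/

import Mathlib

/-- `(i,j)` is a box of the Young diagram of `lam` (parts `lam 1, lam 2, …`, rows indexed
from the top, columns from the left): `1 ≤ i`, `1 ≤ j ≤ lam i`. -/
def inDiagram (lam : ℕ → ℕ) (p : ℕ × ℕ) : Prop :=
  1 ≤ p.1 ∧ 1 ≤ p.2 ∧ p.2 ≤ lam p.1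

/-- A step of a lattice path: up `(i,j) → (i-1,j)` or right `(i,j) → (i,j+1)`. -/
def isStep (p q : ℕ × ℕ) : Prop :=
  (p.1 = q.1 + 1 ∧ p.2 = q.2) ∨ (q.1 = p.1 ∧ q.2 = p.2 + 1)

/-- `P` is a lattice path in `lam` from box `a` to box `b`: a nonempty sequence of boxes of
`lam` starting at `a`, ending at `b`, each step going up or right. -/
def IsLatticePath (lam : ℕ → ℕ) (a b : ℕ × ℕ) (P : List (ℕ × ℕ)) : Prop :=
  P ≠ [] ∧ P.head? = some a ∧ P.getLast? = some b ∧
    (∀ q ∈ P, inDiagram lam q) ∧ List.Chain' isStep P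

/-- The signed weight of a path: the product of `(-1)^{i-1}` over all right steps taken from a
box in row `i` (up steps contribute `1`). -/
def pathWeight : List (ℕ × ℕ) → ℤ
  | [] => 1
  | [_] => 1
  | p :: q :: rest =>
      (if q.1 = p.1 then (-1 : ℤ) ^ (p.1 - 1) else 1) * pathWeight (q :: rest)

/-- `wt(a,b)`: the sum of the signed weights of all lattice paths in `lam` from `a` to `b`. -/
noncomputable def wtSum (lam : ℕ → ℕ) (a b : ℕ × ℕ) : ℤ :=
  ∑ᶠ P ∈ {P : List (ℕ × ℕ) | IsLatticePath lam a b P}, pathWeight P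

/-- The double staircase partition `ρ̃_n`: `(n,n,n-2,n-2,…,2,2)` for even `n` and
`(n,n,n-2,n-2,…,3,3,2)` for odd `n`, as a function sending a row index to its part. -/
def rhoTilde (n i : ℕ) : ℕ :=
  if 1 ≤ i ∧ i ≤ n then (if n % 2 = 1 ∧ i = n then 2 else n - 2 * ((i - 1) / 2)) else 0

def pathsSet (lam : ℕ → ℕ) (a b : ℕ × ℕ) : Set (List (ℕ × ℕ)) :=
  {P | IsLatticePath lam a b P}

lemma path_cons_cons {lam : ℕ → ℕ} {b p q : ℕ × ℕ} {Q : List (ℕ × ℕ)}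
    (h : IsLatticePath lam p b (p :: q :: Q)) :
    isStep p q ∧ IsLatticePath lam q b (q :: Q) := by
  obtain ⟨-, -, hlast, hmem, hchain⟩ := h
  simp only [List.Chain', List.isChain_cons_cons] at hchain
  refine ⟨hchain.1, ?_, rfl, ?_, ?_, hchain.2⟩
  · simp
  · rw [List.getLast?_cons_cons] at hlast; exact hlast
  · intro x hx; exact hmem x (List.mem_cons_of_mem _ hx)

lemma path_head {lam : ℕ → ℕ} {a b p : ℕ × ℕ} {Q : List (ℕ × ℕ)}
    (h : IsLatticePath lam a b (p :: Q)) : IsLatticePath lam p b (p :: Q) := by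
  have hpa : p = a := by have := h.2.1; simp at this; exact this
  rw [← hpa] at h; exact h

lemma path_head_eq {lam : ℕ → ℕ} {a b p : ℕ × ℕ} {Q : List (ℕ × ℕ)}
    (h : IsLatticePath lam a b (p :: Q)) : p = a := by
  have := h.2.1; simp at this; exact this

lemma path_rel {lam : ℕ → ℕ} :
    ∀ (P : List (ℕ × ℕ)) (a b : ℕ × ℕ), IsLatticePath lam a b P →
      b.1 ≤ a.1 ∧ a.2 ≤ b.2 ∧ a.1 + b.2 = b.1 + a.2 + (P.length - 1) := by
  intro P
  induction P with
  | nil => intro a b h; exact absurd rfl h.1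
  | cons p Q IH =>
    intro a b h
    have hpa : p = a := path_head_eq h
    have h' := path_head h
    match Q with
    | [] =>
      have hb : p = b := by have := h'.2.2.1; simp at this; exact this
      have e1 : p.1 = a.1 := by rw [hpa]
      have e2 : p.2 = a.2 := by rw [hpa]
      have f1 : p.1 = b.1 := by rw [hb]
      have f2 : p.2 = b.2 := by rw [hb]
      simp only [List.length_cons, List.length_nil]
      omega
    | q :: Q' =>
      obtain ⟨hstep, hpath⟩ := path_cons_cons h'
      obtain ⟨e1, e2, e3⟩ := IH q b hpath
      have g1 : p.1 = a.1 := by rw [hpa]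
      have g2 : p.2 = a.2 := by rw [hpa]
      simp only [List.length_cons] at e3 ⊢
      rcases hstep with ⟨h1, h2⟩ | ⟨h1, h2⟩ <;> omega

lemma path_self {lam : ℕ → ℕ} {b : ℕ × ℕ} {P : List (ℕ × ℕ)}
    (h : IsLatticePath lam b b P) : P = [b] := by
  obtain ⟨e1, e2, e3⟩ := path_rel P b b h
  have hne : P ≠ [] := h.1
  have hpos : 1 ≤ P.length := List.length_pos_iff.2 hne
  have hlen : P.length = 1 := by omega
  match P, hlen with
  | [x], _ => rw [path_head_eq h]

lemma pathsSet_empty_of_not_inDiagram {lam : ℕ → ℕ} {a b : ℕ × ℕ}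
    (h : ¬ inDiagram lam a) : pathsSet lam a b = ∅ := by
  ext P
  simp only [pathsSet, Set.mem_setOf_eq, Set.mem_empty_iff_false, iff_false]
  intro hp
  match P, hp.1 with
  | p :: Q, _ =>
    exact h (path_head_eq hp ▸ hp.2.2.2.1 p List.mem_cons_self)

lemma pathsSet_empty_of_lt {lam : ℕ → ℕ} {a b : ℕ × ℕ}
    (h : a.1 < b.1 ∨ b.2 < a.2) : pathsSet lam a b = ∅ := by
  ext P
  simp only [pathsSet, Set.mem_setOf_eq, Set.mem_empty_iff_false, iff_false]
  intro hp
  obtain ⟨e1, e2, e3⟩ := path_rel P a b hp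
  omega

lemma pathsSet_self {lam : ℕ → ℕ} {b : ℕ × ℕ} (h : inDiagram lam b) :
    pathsSet lam b b = {[b]} := by
  ext P
  simp only [pathsSet, Set.mem_setOf_eq, Set.mem_singleton_iff]
  constructor
  · exact path_self
  · rintro rfl
    exact ⟨by simp, by simp, by simp, by simpa using h, List.isChain_singleton b⟩

lemma pathsSet_decomp {lam : ℕ → ℕ} {a b : ℕ × ℕ} (h : inDiagram lam a) (hne : a ≠ b) :
    pathsSet lam a b =
      (List.cons a) '' pathsSet lam (a.1 - 1, a.2) b ∪
      (List.cons a) '' pathsSet lam (a.1, a.2 + 1) b := by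
  ext P
  constructor
  · intro hp
    have hp' : IsLatticePath lam a b P := hp
    match P with
    | [] => exact absurd rfl hp'.1
    | [p] =>
      exfalso
      have h1 : p = a := path_head_eq hp'
      have h2 : p = b := by have := hp'.2.2.1; simp at this; exact this
      exact hne (h1 ▸ h2)
    | p :: q :: Q =>
      have hpa : p = a := path_head_eq hp'
      obtain ⟨hstep, hpath⟩ := path_cons_cons (path_head hp')
      rw [hpa] at hstep
      rcases hstep with ⟨h1, h2⟩ | ⟨h1, h2⟩
      · left
        refine ⟨q :: Q, ?_, by rw [hpa]⟩
        have hq : q = (a.1 - 1, a.2) := by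
          obtain ⟨x, y⟩ := q
          simp only [Prod.mk.injEq]
          simp only at h1 h2
          omega
        exact hq ▸ hpath
      · right
        refine ⟨q :: Q, ?_, by rw [hpa]⟩
        have hq : q = (a.1, a.2 + 1) := by
          obtain ⟨x, y⟩ := q
          simp only [Prod.mk.injEq]
          simp only at h1 h2
          omega
        exact hq ▸ hpath
  · rintro (⟨Q, hQ, rfl⟩ | ⟨Q, hQ, rfl⟩)
    · obtain ⟨hne', hh, hl, hm, hc⟩ := hQ
      match Q, hne' with
      | q :: Q', _ =>
        have hq : q = (a.1 - 1, a.2) := by simp at hh; exact hh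
        refine ⟨by simp, by simp, by rwa [List.getLast?_cons_cons], ?_, ?_⟩
        · intro x hx
          rcases List.mem_cons.1 hx with rfl | hx
          · exact h
          · exact hm x hx
        · simp only [List.Chain', List.isChain_cons_cons]
          refine ⟨Or.inl ?_, hc⟩
          rw [hq]
          have := h.1
          exact ⟨by simp only; omega, rfl⟩
    · obtain ⟨hne', hh, hl, hm, hc⟩ := hQ
      match Q, hne' with
      | q :: Q', _ =>
        have hq : q = (a.1, a.2 + 1) := by simp at hh; exact hh
        refine ⟨by simp, by simp, by rwa [List.getLast?_cons_cons], ?_, ?_⟩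
        · intro x hx
          rcases List.mem_cons.1 hx with rfl | hx
          · exact h
          · exact hm x hx
        · simp only [List.Chain', List.isChain_cons_cons]
          exact ⟨Or.inr (by rw [hq]; exact ⟨rfl, rfl⟩), hc⟩

lemma pathsSet_finite {lam : ℕ → ℕ} (b : ℕ × ℕ) :
    ∀ (a : ℕ × ℕ), (pathsSet lam a b).Finite := by
  suffices h : ∀ N a, a.1 + b.2 ≤ N + b.1 + a.2 → (pathsSet lam a b).Finite by
    intro a
    by_cases hc : a.1 < b.1 ∨ b.2 < a.2
    · rw [pathsSet_empty_of_lt hc]; exact Set.finite_empty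
    · exact h (a.1 + b.2) a (by omega)
  intro N
  induction N with
  | zero =>
    intro a ha
    by_cases hc : a.1 < b.1 ∨ b.2 < a.2
    · rw [pathsSet_empty_of_lt hc]; exact Set.finite_empty
    · have hab : a = b := by
        obtain ⟨x, y⟩ := a; obtain ⟨u, v⟩ := b
        simp only [Prod.mk.injEq]
        simp only at ha hc
        omega
      subst hab
      by_cases hd : inDiagram lam a
      · rw [pathsSet_self hd]; exact Set.finite_singleton _
      · rw [pathsSet_empty_of_not_inDiagram hd]; exact Set.finite_empty
  | succ N IH =>
    intro a ha
    by_cases hc : a.1 < b.1 ∨ b.2 < a.2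
    · rw [pathsSet_empty_of_lt hc]; exact Set.finite_empty
    by_cases hab : a = b
    · subst hab
      by_cases hd : inDiagram lam a
      · rw [pathsSet_self hd]; exact Set.finite_singleton _
      · rw [pathsSet_empty_of_not_inDiagram hd]; exact Set.finite_empty
    by_cases hd : inDiagram lam a
    · rw [pathsSet_decomp hd hab]
      have hd1 : 1 ≤ a.1 := hd.1
      refine Set.Finite.union (Set.Finite.image _ ?_) (Set.Finite.image _ ?_)
      · exact IH _ (by simp only; omega)
      · exact IH _ (by simp only; omega)
    · rw [pathsSet_empty_of_not_inDiagram hd]; exact Set.finite_empty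
lemma wtSum_eq_finsum_pathsSet (lam : ℕ → ℕ) (a b : ℕ × ℕ) :
    wtSum lam a b = ∑ᶠ P ∈ pathsSet lam a b, pathWeight P := rfl

lemma wt_zero {lam : ℕ → ℕ} {a b : ℕ × ℕ} (h : pathsSet lam a b = ∅) :
    wtSum lam a b = 0 := by
  rw [wtSum_eq_finsum_pathsSet, h, finsum_mem_empty]

lemma wt_self {lam : ℕ → ℕ} {b : ℕ × ℕ} (h : inDiagram lam b) :
    wtSum lam b b = 1 := by
  rw [wtSum_eq_finsum_pathsSet, pathsSet_self h, finsum_mem_singleton]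
  rfl

lemma wt_rec {lam : ℕ → ℕ} {a b : ℕ × ℕ} (h : inDiagram lam a) (hne : a ≠ b) :
    wtSum lam a b = wtSum lam (a.1 - 1, a.2) b
      + (-1 : ℤ) ^ (a.1 - 1) * wtSum lam (a.1, a.2 + 1) b := by
  have hfu := pathsSet_finite (lam := lam) b (a.1 - 1, a.2)
  have hfr := pathsSet_finite (lam := lam) b (a.1, a.2 + 1)
  have hdisj : Disjoint ((List.cons a) '' pathsSet lam (a.1 - 1, a.2) b)
      ((List.cons a) '' pathsSet lam (a.1, a.2 + 1) b) := by
    rw [Set.disjoint_left]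
    rintro P ⟨Q1, hQ1, rfl⟩ ⟨Q2, hQ2, hEq⟩
    have hq12 : Q1 = Q2 := by
      have := hEq; simp at this; exact this.symm
    subst hq12
    match Q1, hQ1.1 with
    | q :: Q', _ =>
      have h1 : q = (a.1 - 1, a.2) := path_head_eq hQ1
      have h2 : q = (a.1, a.2 + 1) := path_head_eq hQ2
      rw [h1] at h2
      simp at h2
  have hinj : ∀ (s : Set (List (ℕ × ℕ))), Set.InjOn (List.cons a) s := by
    intro s P hP Q hQ hEq
    simpa using hEq
  rw [wtSum_eq_finsum_pathsSet, pathsSet_decomp h hne,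
    finsum_mem_union hdisj (hfu.image _) (hfr.image _),
    finsum_mem_image (hinj _), finsum_mem_image (hinj _)]
  congr 1
  · rw [wtSum_eq_finsum_pathsSet]
    apply finsum_mem_congr rfl
    intro Q hQ
    match Q, hQ.1 with
    | q :: Q', _ =>
      have h1 : q = (a.1 - 1, a.2) := path_head_eq hQ
      show (if q.1 = a.1 then (-1 : ℤ) ^ (a.1 - 1) else 1) * pathWeight (q :: Q')
        = pathWeight (q :: Q')
      have ha1 : 1 ≤ a.1 := h.1
      have : ¬ (q.1 = a.1) := by rw [h1]; simp only; omega
      rw [if_neg this, one_mul]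
  · rw [wtSum_eq_finsum_pathsSet,
      finsum_mem_eq_finite_toFinset_sum _ hfr,
      finsum_mem_eq_finite_toFinset_sum _ hfr, Finset.mul_sum]
    apply Finset.sum_congr rfl
    intro Q hQ
    rw [Set.Finite.mem_toFinset] at hQ
    match Q, hQ.1 with
    | q :: Q', _ =>
      have h1 : q = (a.1, a.2 + 1) := path_head_eq hQ
      show (if q.1 = a.1 then (-1 : ℤ) ^ (a.1 - 1) else 1) * pathWeight (q :: Q')
        = (-1 : ℤ) ^ (a.1 - 1) * pathWeight (q :: Q')
      rw [if_pos (by rw [h1])]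

lemma wt_step {lam : ℕ → ℕ} {a b : ℕ × ℕ} (h : inDiagram lam a) :
    wtSum lam a b = (if a = b then 1 else 0) + wtSum lam (a.1 - 1, a.2) b
      + (-1 : ℤ) ^ (a.1 - 1) * wtSum lam (a.1, a.2 + 1) b := by
  by_cases hab : a = b
  · subst hab
    rw [if_pos rfl, wt_self h]
    have h1 : wtSum lam (a.1 - 1, a.2) a = 0 := by
      apply wt_zero; apply pathsSet_empty_of_lt
      have := h.1
      simp only; omega
    have h2 : wtSum lam (a.1, a.2 + 1) a = 0 := by
      apply wt_zero; apply pathsSet_empty_of_lt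
      simp only; omega
    rw [h1, h2]; ring
  · rw [if_neg hab, wt_rec h hab]; ring

lemma wt_out {lam : ℕ → ℕ} {a b : ℕ × ℕ} (h : ¬ inDiagram lam a) :
    wtSum lam a b = 0 :=
  wt_zero (pathsSet_empty_of_not_inDiagram h)
def bal : ℕ → ℕ → ℕ
  | 0, _ => 1
  | m + 1, 0 => bal m 1
  | m + 1, u + 1 => bal (m + 1) u + bal m (u + 2)
termination_by m u => (m, u)

lemma bal_zero_right (u : ℕ) : bal 0 u = 1 := by simp [bal]

lemma bal_succ_zero (m : ℕ) : bal (m + 1) 0 = bal m 1 := by simp [bal]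

lemma bal_succ_succ (m u : ℕ) : bal (m + 1) (u + 1) = bal (m + 1) u + bal m (u + 2) := by
  rw [bal]

lemma bal_main : ∀ m : ℕ, bal m 0 = catalan m ∧
    ∀ u, bal m (u + 1) = ∑ i ∈ Finset.range (m + 1), catalan i * bal (m - i) u := by
  intro m
  induction m using Nat.strong_induction_on with
  | _ m IH =>
    match m with
    | 0 =>
      refine ⟨by simp [bal_zero_right, catalan_zero], fun u => ?_⟩
      simp [bal_zero_right, catalan_zero]
    | m + 1 =>
      obtain ⟨IHz, IHs⟩ := IH m (Nat.lt_succ_self m)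
      have hzero : bal (m + 1) 0 = catalan (m + 1) := by
        rw [bal_succ_zero, IHs 0, catalan_succ,
          Fin.sum_univ_eq_sum_range (fun i => catalan i * catalan (m - i)) (m + 1)]
        apply Finset.sum_congr rfl
        intro i hi
        rw [Finset.mem_range] at hi
        congr 1
        exact (IH (m - i) (by omega)).1
      refine ⟨hzero, fun u => ?_⟩
      induction u with
      | zero =>
        have hR : ∑ i ∈ Finset.range (m + 1 + 1), catalan i * bal (m + 1 - i) 0
            = (∑ i ∈ Finset.range (m + 1), catalan i * bal (m - i) 1) + catalan (m + 1) := by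
          rw [Finset.sum_range_succ]
          congr 1
          · apply Finset.sum_congr rfl
            intro i hi
            rw [Finset.mem_range] at hi
            congr 1
            have h : m + 1 - i = (m - i) + 1 := by omega
            rw [h, bal_succ_zero]
          · simp [Nat.sub_self, bal_zero_right]
        rw [bal_succ_succ, hzero, IHs 1, hR]
        omega
      | succ u IHu =>
        have hR : ∑ i ∈ Finset.range (m + 1 + 1), catalan i * bal (m + 1 - i) (u + 1)
            = (∑ i ∈ Finset.range (m + 1 + 1), catalan i * bal (m + 1 - i) u)
              + ∑ i ∈ Finset.range (m + 1), catalan i * bal (m - i) (u + 2) := by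
          rw [Finset.sum_range_succ, Finset.sum_range_succ (n := m + 1)]
          have h1 : ∑ i ∈ Finset.range (m + 1), catalan i * bal (m + 1 - i) (u + 1)
              = ∑ i ∈ Finset.range (m + 1),
                  (catalan i * bal (m + 1 - i) u + catalan i * bal (m - i) (u + 2)) := by
            apply Finset.sum_congr rfl
            intro i hi
            rw [Finset.mem_range] at hi
            have h : m + 1 - i = (m - i) + 1 := by omega
            rw [h, bal_succ_succ, Nat.mul_add, ← h]
          rw [h1, Finset.sum_add_distrib]
          simp [Nat.sub_self, bal_zero_right]
          omega
        rw [bal_succ_succ, IHu, IHs (u + 2), hR]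
      
lemma bal_catalan (m : ℕ) : bal m 0 = catalan m := (bal_main m).1

lemma bal_rec {m u : ℕ} (hm : 1 ≤ m) (hu : 1 ≤ u) :
    bal m u = bal (m - 1) (u + 1) + bal m (u - 1) := by
  obtain ⟨m', rfl⟩ : ∃ m', m = m' + 1 := ⟨m - 1, by omega⟩
  obtain ⟨u', rfl⟩ : ∃ u', u = u' + 1 := ⟨u - 1, by omega⟩
  rw [bal_succ_succ]
  simp only [Nat.add_sub_cancel]
  rw [show u' + 1 + 1 = u' + 2 from rfl]
  omega

lemma bal_rec0 {m : ℕ} (hm : 1 ≤ m) : bal m 0 = bal (m - 1) 1 := by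
  obtain ⟨m', rfl⟩ : ∃ m', m = m' + 1 := ⟨m - 1, by omega⟩
  simp only [Nat.add_sub_cancel]
  exact bal_succ_zero m'

def V1 (k i j : ℕ) : ℤ :=
  if i % 2 = 0 ∧ j % 2 = 1 then 0
  else (bal ((i - 1) / 2) (k - ((i - 1) / 2 + (j - 1) / 2 + 1)) : ℤ)

def V2 (k i j : ℕ) : ℤ :=
  if i ≤ 1 then 0
  else if i % 2 = 0 then
    (-1) ^ j * (bal (i / 2 - 1) (k - (i / 2 - 1 + (j - 1) / 2 + 1)) : ℤ)
  else if j % 2 = 1 then 0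
  else (bal ((i - 1) / 2 - 1) (k - ((i - 1) / 2 - 1 + (j - 1) / 2 + 1)) : ℤ)

lemma neg_one_pow_even {n : ℕ} (h : n % 2 = 0) : ((-1 : ℤ)) ^ n = 1 :=
  Even.neg_one_pow ⟨n / 2, by omega⟩
lemma neg_one_pow_odd {n : ℕ} (h : n % 2 = 1) : ((-1 : ℤ)) ^ n = -1 :=
  Odd.neg_one_pow ⟨n / 2, by omega⟩

lemma V1_oo (k m s : ℕ) : V1 k (2 * m + 1) (2 * s + 1) = (bal m (k - (m + s + 1)) : ℤ) := by
  rw [V1, if_neg (by omega)]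
  have e1 : (2 * m + 1 - 1) / 2 = m := by omega
  have e2 : (2 * s + 1 - 1) / 2 = s := by omega
  rw [e1, e2]

lemma V1_oe (k m s : ℕ) : V1 k (2 * m + 1) (2 * s + 2) = (bal m (k - (m + s + 1)) : ℤ) := by
  rw [V1, if_neg (by omega)]
  have e1 : (2 * m + 1 - 1) / 2 = m := by omega
  have e2 : (2 * s + 2 - 1) / 2 = s := by omega
  rw [e1, e2]

lemma V1_e1 (k i j : ℕ) (hi : i % 2 = 0) (hj : j % 2 = 1) : V1 k i j = 0 := by
  rw [V1, if_pos ⟨hi, hj⟩]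

lemma V1_ee (k m s : ℕ) : V1 k (2 * m + 2) (2 * s + 2) = (bal m (k - (m + s + 1)) : ℤ) := by
  rw [V1, if_neg (by omega)]
  have e1 : (2 * m + 2 - 1) / 2 = m := by omega
  have e2 : (2 * s + 2 - 1) / 2 = s := by omega
  rw [e1, e2]

lemma V1_ee' (k m s : ℕ) (hm : 1 ≤ m) :
    V1 k (2 * m) (2 * s + 2) = (bal (m - 1) (k - (m + s)) : ℤ) := by
  rw [V1, if_neg (by omega)]
  have e1 : (2 * m - 1) / 2 = m - 1 := by omega
  have e2 : (2 * s + 2 - 1) / 2 = s := by omega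
  have e3 : m - 1 + s + 1 = m + s := by omega
  rw [e1, e2, e3]

lemma V2_1 (k j : ℕ) : V2 k 1 j = 0 := by rw [V2, if_pos (by omega)]

lemma V2_oo (k m s : ℕ) : V2 k (2 * m + 1) (2 * s + 1) = 0 := by
  rw [V2]
  by_cases h : 2 * m + 1 ≤ 1
  · rw [if_pos h]
  · rw [if_neg h, if_neg (by omega), if_pos (by omega)]

lemma V2_oe (k m s : ℕ) (hm : 1 ≤ m) :
    V2 k (2 * m + 1) (2 * s + 2) = (bal (m - 1) (k - (m + s)) : ℤ) := by
  rw [V2, if_neg (by omega), if_neg (by omega), if_neg (by omega)]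
  have e1 : (2 * m + 1 - 1) / 2 - 1 = m - 1 := by omega
  have e2 : (2 * s + 2 - 1) / 2 = s := by omega
  have e3 : m - 1 + s + 1 = m + s := by omega
  rw [e1, e2, e3]

lemma V2_eo (k m s : ℕ) : V2 k (2 * m + 2) (2 * s + 1) = -(bal m (k - (m + s + 1)) : ℤ) := by
  rw [V2, if_neg (by omega), if_pos (by omega)]
  have e1 : (2 * m + 2) / 2 - 1 = m := by omega
  have e2 : (2 * s + 1 - 1) / 2 = s := by omega
  rw [e1, e2, neg_one_pow_odd (by omega)]
  ring

lemma V2_ee (k m s : ℕ) : V2 k (2 * m + 2) (2 * s + 2) = (bal m (k - (m + s + 1)) : ℤ) := by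
  rw [V2, if_neg (by omega), if_pos (by omega)]
  have e1 : (2 * m + 2) / 2 - 1 = m := by omega
  have e2 : (2 * s + 2 - 1) / 2 = s := by omega
  rw [e1, e2, neg_one_pow_even (by omega)]
  ring

lemma V2_eo' (k m s : ℕ) (hm : 1 ≤ m) :
    V2 k (2 * m) (2 * s + 1) = -(bal (m - 1) (k - (m + s)) : ℤ) := by
  rw [V2, if_neg (by omega), if_pos (by omega)]
  have e1 : (2 * m) / 2 - 1 = m - 1 := by omega
  have e2 : (2 * s + 1 - 1) / 2 = s := by omega
  have e3 : m - 1 + s + 1 = m + s := by omega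
  rw [e1, e2, e3, neg_one_pow_odd (by omega)]
  ring

lemma V2_ee' (k m s : ℕ) (hm : 1 ≤ m) :
    V2 k (2 * m) (2 * s + 2) = (bal (m - 1) (k - (m + s)) : ℤ) := by
  rw [V2, if_neg (by omega), if_pos (by omega)]
  have e1 : (2 * m) / 2 - 1 = m - 1 := by omega
  have e2 : (2 * s + 2 - 1) / 2 = s := by omega
  have e3 : m - 1 + s + 1 = m + s := by omega
  rw [e1, e2, e3, neg_one_pow_even (by omega)]
  ring

lemma rho_eq (k i : ℕ) (h1 : 1 ≤ i) (h2 : i ≤ 2 * k) :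
    rhoTilde (2 * k) i = 2 * k - 2 * ((i - 1) / 2) := by
  rw [rhoTilde, if_pos ⟨h1, h2⟩, if_neg (by omega)]

lemma V2_1' (k m j : ℕ) (hm : m = 0) : V2 k (2 * m + 1) j = 0 := by
  subst hm; exact V2_1 k j

lemma inDiag (k i j : ℕ) : inDiagram (rhoTilde (2 * k)) (i, j) ↔
    1 ≤ i ∧ i ≤ 2 * k ∧ 1 ≤ j ∧ j ≤ 2 * k - 2 * ((i - 1) / 2) := by
  constructor
  · rintro ⟨a, b, c⟩
    have a' : 1 ≤ i := a
    have b' : 1 ≤ j := b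
    have c' : j ≤ rhoTilde (2 * k) i := c
    by_cases h : i ≤ 2 * k
    · rw [rho_eq k i a' h] at c'; exact ⟨a', h, b', c'⟩
    · rw [rhoTilde, if_neg (by omega)] at c'; omega
  · rintro ⟨a, b, c, d⟩
    exact ⟨a, c, by show j ≤ rhoTilde (2 * k) i; rw [rho_eq k i a b]; exact d⟩

lemma wt_step' {lam : ℕ → ℕ} {i j : ℕ} {b : ℕ × ℕ} (h : inDiagram lam (i, j)) :
    wtSum lam (i, j) b = (if (i, j) = b then 1 else 0) + wtSum lam (i - 1, j) b
      + (-1 : ℤ) ^ (i - 1) * wtSum lam (i, j + 1) b := wt_step h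

lemma main (k : ℕ) (hk : 1 ≤ k) : ∀ N i j, 1 ≤ i → i ≤ 2 * k → 1 ≤ j →
    j ≤ 2 * k - 2 * ((i - 1) / 2) → i + (2 * k - j) ≤ N →
    (wtSum (rhoTilde (2 * k)) (i, j) (1, 2 * k) = V1 k i j ∧
     wtSum (rhoTilde (2 * k)) (i, j) (2, 2 * k) = V2 k i j) := by
  intro N
  induction N with
  | zero => intro i j h1 _ _ _ h5; omega
  | succ N IH =>
    intro i j h1 h2 h3 h4 h5
    have hd : inDiagram (rhoTilde (2 * k)) (i, j) := (inDiag k i j).2 ⟨h1, h2, h3, h4⟩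
    have e1 := wt_step' (b := (1, 2 * k)) hd
    have e2 := wt_step' (b := (2, 2 * k)) hd
    by_cases hio : i % 2 = 1
    · -- odd row i = 2m+1
      obtain ⟨m, rfl⟩ : ∃ m, i = 2 * m + 1 := ⟨i / 2, by omega⟩
      have him : (2 * m + 1 - 1) / 2 = m := by omega
      rw [him] at h4
      rw [show 2 * m + 1 - 1 = 2 * m from by omega] at e1 e2
      rw [neg_one_pow_even (by omega : 2 * m % 2 = 0), one_mul] at e1 e2
      by_cases hjo : j % 2 = 1
      · -- cell (2m+1, 2s+1)
        obtain ⟨s, rfl⟩ : ∃ s, j = 2 * s + 1 := ⟨j / 2, by omega⟩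
        have hms : m + s + 1 ≤ k := by omega
        rw [show 2 * s + 1 + 1 = 2 * s + 2 from by omega] at e1 e2
        rw [if_neg (by simp only [Prod.mk.injEq]; omega)] at e1
        rw [if_neg (by simp only [Prod.mk.injEq]; omega)] at e2
        obtain ⟨hr1, hr2⟩ := IH (2 * m + 1) (2 * s + 2) (by omega) (by omega) (by omega)
          (by omega) (by omega)
        rw [hr1, V1_oe] at e1
        rw [hr2] at e2
        by_cases hm0 : m = 0
        · have hu1 : wtSum (rhoTilde (2 * k)) (2 * m, 2 * s + 1) (1, 2 * k) = 0 :=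
            wt_out (fun hc => by have := (inDiag k (2 * m) (2 * s + 1)).1 hc; omega)
          have hu2 : wtSum (rhoTilde (2 * k)) (2 * m, 2 * s + 1) (2, 2 * k) = 0 :=
            wt_out (fun hc => by have := (inDiag k (2 * m) (2 * s + 1)).1 hc; omega)
          rw [hu1] at e1
          rw [hu2, V2_1' k m _ hm0] at e2
          refine ⟨?_, ?_⟩
          · rw [e1, V1_oo]; ring
          · rw [e2, V2_1' k m _ hm0]; ring
        · obtain ⟨hu1, hu2⟩ := IH (2 * m) (2 * s + 1) (by omega) (by omega) (by omega)
            (by omega) (by omega)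
          rw [hu1, V1_e1 k (2 * m) (2 * s + 1) (by omega) (by omega)] at e1
          rw [hu2, V2_eo' k m s (by omega)] at e2
          rw [V2_oe k m s (by omega)] at e2
          refine ⟨?_, ?_⟩
          · rw [e1, V1_oo]; ring
          · rw [e2, V2_oo]; ring
      · -- cell (2m+1, 2s+2)
        obtain ⟨s, rfl⟩ : ∃ s, j = 2 * s + 2 := ⟨(j - 2) / 2, by omega⟩
        have hms : m + s + 1 ≤ k := by omega
        rw [show 2 * s + 2 + 1 = 2 * (s + 1) + 1 from by omega] at e1 e2
        rw [if_neg (by simp only [Prod.mk.injEq]; omega)] at e2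
        -- right neighbor in diagram iff m+s+2 ≤ k
        by_cases hu0 : m + s + 2 ≤ k
        · obtain ⟨hr1, hr2⟩ := IH (2 * m + 1) (2 * (s + 1) + 1) (by omega) (by omega)
            (by omega) (by omega) (by omega)
          rw [hr1, V1_oo k m (s + 1)] at e1
          rw [hr2, V2_oo k m (s + 1)] at e2
          rw [if_neg (by simp only [Prod.mk.injEq]; omega)] at e1
          by_cases hm0 : m = 0
          · have hu1 : wtSum (rhoTilde (2 * k)) (2 * m, 2 * s + 2) (1, 2 * k) = 0 :=
              wt_out (fun hc => by have := (inDiag k (2 * m) (2 * s + 2)).1 hc; omega)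
            have hu2 : wtSum (rhoTilde (2 * k)) (2 * m, 2 * s + 2) (2, 2 * k) = 0 :=
              wt_out (fun hc => by have := (inDiag k (2 * m) (2 * s + 2)).1 hc; omega)
            rw [hu1] at e1
            rw [hu2] at e2
            refine ⟨?_, ?_⟩
            · rw [e1, V1_oe]
              rw [show m + (s + 1) + 1 = m + s + 2 from by omega]
              rw [show (bal m (k - (m + s + 1))) = 1 from by rw [hm0]; exact bal_zero_right _]
              rw [show (bal m (k - (m + s + 2))) = 1 from by rw [hm0]; exact bal_zero_right _]
              ring
            · rw [e2, V2_1' k m _ hm0]; ring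
          · obtain ⟨hu1, hu2⟩ := IH (2 * m) (2 * s + 2) (by omega) (by omega) (by omega)
              (by omega) (by omega)
            rw [hu1, V1_ee' k m s (by omega)] at e1
            rw [hu2, V2_ee' k m s (by omega)] at e2
            refine ⟨?_, ?_⟩
            · have hbal : (bal m (k - (m + s + 1)) : ℤ)
                  = (bal (m - 1) (k - (m + s)) : ℤ) + (bal m (k - (m + s + 2)) : ℤ) := by
                rw [bal_rec (by omega : 1 ≤ m) (by omega : 1 ≤ k - (m + s + 1)),
                  show k - (m + s + 1) + 1 = k - (m + s) from by omega,
                  show k - (m + s + 1) - 1 = k - (m + s + 2) from by omega]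
                push_cast; ring
              rw [e1, V1_oe, show m + (s + 1) + 1 = m + s + 2 from by omega, hbal]
              ring
            · rw [e2, V2_oe k m s (by omega)]; ring
        · -- right neighbor out of diagram (u = 0, i.e. k = m+s+1)
          have hr1 : wtSum (rhoTilde (2 * k)) (2 * m + 1, 2 * (s + 1) + 1) (1, 2 * k) = 0 :=
            wt_out (fun hc => by have := (inDiag k (2 * m + 1) (2 * (s + 1) + 1)).1 hc; omega)
          have hr2 : wtSum (rhoTilde (2 * k)) (2 * m + 1, 2 * (s + 1) + 1) (2, 2 * k) = 0 :=
            wt_out (fun hc => by have := (inDiag k (2 * m + 1) (2 * (s + 1) + 1)).1 hc; omega)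
          rw [hr1] at e1
          rw [hr2] at e2
          by_cases hm0 : m = 0
          · -- center is (1, 2k): delta = 1 for target 1
            rw [if_pos (by simp only [Prod.mk.injEq]; omega)] at e1
            have hu1 : wtSum (rhoTilde (2 * k)) (2 * m, 2 * s + 2) (1, 2 * k) = 0 :=
              wt_out (fun hc => by have := (inDiag k (2 * m) (2 * s + 2)).1 hc; omega)
            have hu2 : wtSum (rhoTilde (2 * k)) (2 * m, 2 * s + 2) (2, 2 * k) = 0 :=
              wt_out (fun hc => by have := (inDiag k (2 * m) (2 * s + 2)).1 hc; omega)
            rw [hu1] at e1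
            rw [hu2] at e2
            refine ⟨?_, ?_⟩
            · rw [e1, V1_oe,
                show (bal m (k - (m + s + 1))) = 1 from by rw [hm0]; exact bal_zero_right _]
              ring
            · rw [e2, V2_1' k m _ hm0]; ring
          · rw [if_neg (by simp only [Prod.mk.injEq]; omega)] at e1
            obtain ⟨hu1, hu2⟩ := IH (2 * m) (2 * s + 2) (by omega) (by omega) (by omega)
              (by omega) (by omega)
            rw [hu1, V1_ee' k m s (by omega)] at e1
            rw [hu2, V2_ee' k m s (by omega)] at e2
            refine ⟨?_, ?_⟩
            · rw [e1, V1_oe,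
                show k - (m + s + 1) = 0 from by omega, bal_rec0 (by omega : 1 ≤ m),
                show k - (m + s) = 1 from by omega]
              ring
            · rw [e2, V2_oe k m s (by omega)]; ring
    · -- even row i = 2m+2
      obtain ⟨m, rfl⟩ : ∃ m, i = 2 * m + 2 := ⟨(i - 2) / 2, by omega⟩
      have him : (2 * m + 2 - 1) / 2 = m := by omega
      rw [him] at h4
      rw [show 2 * m + 2 - 1 = 2 * m + 1 from by omega] at e1 e2
      rw [neg_one_pow_odd (by omega : (2 * m + 1) % 2 = 1)] at e1 e2
      rw [if_neg (by simp only [Prod.mk.injEq]; omega)] at e1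
      by_cases hjo : j % 2 = 1
      · -- cell (2m+2, 2s+1)
        obtain ⟨s, rfl⟩ : ∃ s, j = 2 * s + 1 := ⟨j / 2, by omega⟩
        have hms : m + s + 1 ≤ k := by omega
        rw [show 2 * s + 1 + 1 = 2 * s + 2 from by omega] at e1 e2
        rw [if_neg (by simp only [Prod.mk.injEq]; omega)] at e2
        obtain ⟨hu1, hu2⟩ := IH (2 * m + 1) (2 * s + 1) (by omega) (by omega) (by omega)
          (by omega) (by omega)
        obtain ⟨hr1, hr2⟩ := IH (2 * m + 2) (2 * s + 2) (by omega) (by omega) (by omega)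
          (by omega) (by omega)
        rw [hu1, V1_oo] at e1
        rw [hu2, V2_oo] at e2
        rw [hr1, V1_ee] at e1
        rw [hr2, V2_ee] at e2
        refine ⟨?_, ?_⟩
        · rw [e1, V1_e1 k (2 * m + 2) (2 * s + 1) (by omega) (by omega)]; ring
        · rw [e2, V2_eo]; ring
      · -- cell (2m+2, 2s+2)
        obtain ⟨s, rfl⟩ : ∃ s, j = 2 * s + 2 := ⟨(j - 2) / 2, by omega⟩
        have hms : m + s + 1 ≤ k := by omega
        rw [show 2 * s + 2 + 1 = 2 * (s + 1) + 1 from by omega] at e1 e2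
        obtain ⟨hu1, hu2⟩ := IH (2 * m + 1) (2 * s + 2) (by omega) (by omega) (by omega)
          (by omega) (by omega)
        rw [hu1, V1_oe] at e1
        rw [hu2] at e2
        by_cases hr_in : m + s + 2 ≤ k
        · obtain ⟨hr1, hr2⟩ := IH (2 * m + 2) (2 * (s + 1) + 1) (by omega) (by omega)
            (by omega) (by omega) (by omega)
          rw [hr1, V1_e1 k (2 * m + 2) (2 * (s + 1) + 1) (by omega) (by omega)] at e1
          rw [hr2, V2_eo k m (s + 1)] at e2
          by_cases hm0 : m = 0
          · rw [if_neg (by simp only [Prod.mk.injEq]; omega)] at e2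
            rw [show (2 * m + 1 : ℕ) = 1 from by omega, V2_1] at e2
            refine ⟨?_, ?_⟩
            · rw [e1, V1_ee]; ring
            · rw [e2, V2_ee,
                show m + (s + 1) + 1 = m + s + 2 from by omega,
                show (bal m (k - (m + s + 1))) = 1 from by rw [hm0]; exact bal_zero_right _,
                show (bal m (k - (m + s + 2))) = 1 from by rw [hm0]; exact bal_zero_right _]
              ring
          · rw [if_neg (by simp only [Prod.mk.injEq]; omega)] at e2
            rw [V2_oe k m s (by omega)] at e2
            refine ⟨?_, ?_⟩
            · rw [e1, V1_ee]; ring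
            · have hbal : (bal m (k - (m + s + 1)) : ℤ)
                  = (bal (m - 1) (k - (m + s)) : ℤ) + (bal m (k - (m + s + 2)) : ℤ) := by
                rw [bal_rec (by omega : 1 ≤ m) (by omega : 1 ≤ k - (m + s + 1)),
                  show k - (m + s + 1) + 1 = k - (m + s) from by omega,
                  show k - (m + s + 1) - 1 = k - (m + s + 2) from by omega]
                push_cast; ring
              rw [e2, V2_ee, show m + (s + 1) + 1 = m + s + 2 from by omega, hbal]
              ring
        · have hr1 : wtSum (rhoTilde (2 * k)) (2 * m + 2, 2 * (s + 1) + 1) (1, 2 * k) = 0 :=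
            wt_out (fun hc => by have := (inDiag k (2 * m + 2) (2 * (s + 1) + 1)).1 hc; omega)
          have hr2 : wtSum (rhoTilde (2 * k)) (2 * m + 2, 2 * (s + 1) + 1) (2, 2 * k) = 0 :=
            wt_out (fun hc => by have := (inDiag k (2 * m + 2) (2 * (s + 1) + 1)).1 hc; omega)
          rw [hr1] at e1
          rw [hr2] at e2
          by_cases hm0 : m = 0
          · -- center is (2, 2k): delta = 1 for target 2
            rw [if_pos (by simp only [Prod.mk.injEq]; omega)] at e2
            rw [show (2 * m + 1 : ℕ) = 1 from by omega, V2_1] at e2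
            refine ⟨?_, ?_⟩
            · rw [e1, V1_ee]; ring
            · rw [e2, V2_ee,
                show (bal m (k - (m + s + 1))) = 1 from by rw [hm0]; exact bal_zero_right _]
              ring
          · rw [if_neg (by simp only [Prod.mk.injEq]; omega)] at e2
            rw [V2_oe k m s (by omega)] at e2
            refine ⟨?_, ?_⟩
            · rw [e1, V1_ee]; ring
            · rw [e2, V2_ee,
                show k - (m + s + 1) = 0 from by omega, bal_rec0 (by omega : 1 ≤ m),
                show k - (m + s) = 1 from by omega]
              ring

theorem stmt7_aux (k : ℕ) (hk : 1 ≤ k) :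
    wtSum (rhoTilde (2 * k)) (2 * k, 1) (1, 2 * k) = 0 ∧
    wtSum (rhoTilde (2 * k)) (2 * k, 2) (1, 2 * k) = (catalan (k - 1) : ℤ) ∧
    wtSum (rhoTilde (2 * k)) (2 * k, 1) (2, 2 * k) = -(catalan (k - 1) : ℤ) ∧
    wtSum (rhoTilde (2 * k)) (2 * k, 2) (2, 2 * k) = (catalan (k - 1) : ℤ) := by
  obtain ⟨a1, a2⟩ := main k hk (4 * k) (2 * k) 1 (by omega) (by omega) (by omega)
    (by omega) (by omega)
  obtain ⟨b1, b2⟩ := main k hk (4 * k) (2 * k) 2 (by omega) (by omega) (by omega)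
    (by omega) (by omega)
  have hVee := V1_ee k (k - 1) 0
  rw [show 2 * (k - 1) + 2 = 2 * k from by omega, show (2 * 0 + 2 : ℕ) = 2 from by omega,
    show k - (k - 1 + 0 + 1) = 0 from by omega, bal_catalan] at hVee
  have hW2o := V2_eo k (k - 1) 0
  rw [show 2 * (k - 1) + 2 = 2 * k from by omega, show (2 * 0 + 1 : ℕ) = 1 from by omega,
    show k - (k - 1 + 0 + 1) = 0 from by omega, bal_catalan] at hW2o
  have hW2e := V2_ee k (k - 1) 0
  rw [show 2 * (k - 1) + 2 = 2 * k from by omega, show (2 * 0 + 2 : ℕ) = 2 from by omega,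
    show k - (k - 1 + 0 + 1) = 0 from by omega, bal_catalan] at hW2e
  refine ⟨?_, ?_, ?_, ?_⟩
  · rw [a1, V1_e1 k (2 * k) 1 (by omega) (by omega)]
  · rw [b1, hVee]
  · rw [a2, hW2o]
  · rw [b2, hW2e]

/-- In the double staircase partition `ρ̃_{2k}` (for `k ≥ 1`), the signed-weighted
lattice path sums satisfy `wt((2k,1),(1,2k)) = 0`, `wt((2k,2),(1,2k)) = C_{k-1}`,
`wt((2k,1),(2,2k)) = -C_{k-1}` and `wt((2k,2),(2,2k)) = C_{k-1}`. -/
theorem stmt7 (k : ℕ) (hk : 1 ≤ k) :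
    wtSum (rhoTilde (2 * k)) (2 * k, 1) (1, 2 * k) = 0 ∧
    wtSum (rhoTilde (2 * k)) (2 * k, 2) (1, 2 * k) = (catalan (k - 1) : ℤ) ∧
    wtSum (rhoTilde (2 * k)) (2 * k, 1) (2, 2 * k) = -(catalan (k - 1) : ℤ) ∧
    wtSum (rhoTilde (2 * k)) (2 * k, 2) (2, 2 * k) = (catalan (k - 1) : ℤ) := by
  exact stmt7_aux k hk
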